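/- Let m = 2, d = 3, and let γ : Sym²ℝ³ → ℝ send a symmetric 3×3 matrix to its middle eigenvalue. Then γ is continuous, γ(−A) = −γ(A), and γ(A) = 0 if and only if A ∈ S := {vvᵀ − wwᵀ : v, w ∈ ℝ³}. -/

import Mathlib

open Matrix

namespace MidEigAux

/-! Auxiliary development: the Rayleigh quotient characterization of the
extreme eigenvalues of a symmetric `3 × 3` real matrix. -/

/-- The quadratic form of a matrix. -/
noncomputable def qf (A : Matrix (Fin 3) (Fin 3) ℝ) (x : Fin 3 → ℝ) : ℝ := x ⬝ᵥ (A *ᵥ x)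

/-- The unit sphere for the dot product. -/
def sph : Set (Fin 3 → ℝ) := {x | x ⬝ᵥ x = 1}

lemma sph_nonempty : sph.Nonempty := by
  refine ⟨![1,0,0], ?_⟩
  simp [sph, dotProduct, Fin.sum_univ_three]

lemma abs_le_one_of_sph {x : Fin 3 → ℝ} (hx : x ∈ sph) (i : Fin 3) : |x i| ≤ 1 := by
  have h : x i ^ 2 ≤ 1 := by
    have : ∑ j, x j * x j = 1 := hx
    have hle : x i * x i ≤ ∑ j, x j * x j :=
      Finset.single_le_sum (f := fun j => x j * x j) (fun j _ => mul_self_nonneg _)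
        (Finset.mem_univ i)
    nlinarith
  nlinarith [abs_nonneg (x i), sq_abs (x i)]

lemma qf_abs_le {A : Matrix (Fin 3) (Fin 3) ℝ} {x : Fin 3 → ℝ} (hx : x ∈ sph) :
    |qf A x| ≤ ∑ i, ∑ j, |A i j| := by
  have h1 : qf A x = ∑ i, ∑ j, x i * (A i j * x j) := by
    simp [qf, dotProduct, mulVec, Finset.mul_sum]
  rw [h1]
  refine (Finset.abs_sum_le_sum_abs _ _).trans (Finset.sum_le_sum fun i _ => ?_)
  refine (Finset.abs_sum_le_sum_abs _ _).trans (Finset.sum_le_sum fun j _ => ?_)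
  rw [abs_mul, abs_mul]
  have hxi := abs_le_one_of_sph hx i
  have hxj := abs_le_one_of_sph hx j
  have h0 := abs_nonneg (A i j)
  have hxi0 := abs_nonneg (x i)
  have hxj0 := abs_nonneg (x j)
  nlinarith [mul_nonneg h0 hxj0, mul_le_mul_of_nonneg_left hxj0 h0]

lemma qf_sub (A B : Matrix (Fin 3) (Fin 3) ℝ) (x : Fin 3 → ℝ) :
    qf (A - B) x = qf A x - qf B x := by
  simp [qf, sub_mulVec, dotProduct_sub]

lemma qf_neg (A : Matrix (Fin 3) (Fin 3) ℝ) (x : Fin 3 → ℝ) :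
    qf (-A) x = -qf A x := by
  simp [qf, neg_mulVec, dotProduct_neg]

/-- The minimal value of the quadratic form on the unit sphere. -/
noncomputable def lmin (A : Matrix (Fin 3) (Fin 3) ℝ) : ℝ := sInf (qf A '' sph)

/-- The maximal value of the quadratic form on the unit sphere. -/
noncomputable def lmax (A : Matrix (Fin 3) (Fin 3) ℝ) : ℝ := sSup (qf A '' sph)

lemma image_nonempty (A : Matrix (Fin 3) (Fin 3) ℝ) : (qf A '' sph).Nonempty :=
  sph_nonempty.image _

lemma bddBelow_image (A : Matrix (Fin 3) (Fin 3) ℝ) : BddBelow (qf A '' sph) := by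
  refine ⟨-(∑ i, ∑ j, |A i j|), ?_⟩
  rintro r ⟨x, hx, rfl⟩
  have h := abs_le.mp (qf_abs_le (A := A) hx)
  linarith [h.1]

lemma bddAbove_image (A : Matrix (Fin 3) (Fin 3) ℝ) : BddAbove (qf A '' sph) := by
  refine ⟨∑ i, ∑ j, |A i j|, ?_⟩
  rintro r ⟨x, hx, rfl⟩
  exact (abs_le.mp (qf_abs_le hx)).2

lemma lmin_sub_le (A B : Matrix (Fin 3) (Fin 3) ℝ) :
    |lmin A - lmin B| ≤ ∑ i, ∑ j, |(A - B) i j| := by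
  set C := ∑ i, ∑ j, |(A - B) i j| with hC
  have key : ∀ x ∈ sph, |qf A x - qf B x| ≤ C := by
    intro x hx
    rw [← qf_sub]
    exact qf_abs_le hx
  have h1 : lmin A ≥ lmin B - C := by
    refine le_csInf (image_nonempty A) ?_
    rintro r ⟨x, hx, rfl⟩
    have h2 : lmin B ≤ qf B x := csInf_le (bddBelow_image B) ⟨x, hx, rfl⟩
    have h3 := abs_le.mp (key x hx)
    linarith [h3.1]
  have h2 : lmin B ≥ lmin A - C := by
    refine le_csInf (image_nonempty B) ?_
    rintro r ⟨x, hx, rfl⟩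
    have h2 : lmin A ≤ qf A x := csInf_le (bddBelow_image A) ⟨x, hx, rfl⟩
    have h3 := abs_le.mp (key x hx)
    linarith [h3.2]
  rw [abs_le]; constructor <;> linarith

lemma lmax_sub_le (A B : Matrix (Fin 3) (Fin 3) ℝ) :
    |lmax A - lmax B| ≤ ∑ i, ∑ j, |(A - B) i j| := by
  set C := ∑ i, ∑ j, |(A - B) i j| with hC
  have key : ∀ x ∈ sph, |qf A x - qf B x| ≤ C := by
    intro x hx
    rw [← qf_sub]
    exact qf_abs_le hx
  have h1 : lmax A ≤ lmax B + C := by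
    refine csSup_le (image_nonempty A) ?_
    rintro r ⟨x, hx, rfl⟩
    have h2 : qf B x ≤ lmax B := le_csSup (bddAbove_image B) ⟨x, hx, rfl⟩
    have h3 := abs_le.mp (key x hx)
    linarith [h3.2]
  have h2 : lmax B ≤ lmax A + C := by
    refine csSup_le (image_nonempty B) ?_
    rintro r ⟨x, hx, rfl⟩
    have h2 : qf A x ≤ lmax A := le_csSup (bddAbove_image A) ⟨x, hx, rfl⟩
    have h3 := abs_le.mp (key x hx)
    linarith [h3.1]
  rw [abs_le]; constructor <;> linarith

lemma continuous_err (B : Matrix (Fin 3) (Fin 3) ℝ) :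
    Continuous (fun A : Matrix (Fin 3) (Fin 3) ℝ => ∑ i, ∑ j, |(A - B) i j|) := by
  refine continuous_finset_sum _ fun i _ => continuous_finset_sum _ fun j _ => ?_
  have : Continuous (fun A : Matrix (Fin 3) (Fin 3) ℝ => A i j) :=
    (continuous_apply j).comp (continuous_apply i)
  exact (this.sub continuous_const).abs

lemma continuous_of_dist_le (f : Matrix (Fin 3) (Fin 3) ℝ → ℝ)
    (h : ∀ A B, |f A - f B| ≤ ∑ i, ∑ j, |(A - B) i j|) : Continuous f := by
  rw [continuous_iff_continuousAt]
  intro B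
  rw [ContinuousAt, tendsto_iff_dist_tendsto_zero]
  have herr : Filter.Tendsto (fun A => ∑ i, ∑ j, |(A - B) i j|) (nhds B) (nhds 0) := by
    have := (continuous_err B).tendsto B
    simpa using this
  refine squeeze_zero (fun A => dist_nonneg) (fun A => ?_) herr
  rw [Real.dist_eq]
  exact h A B

lemma continuous_lmin : Continuous lmin := continuous_of_dist_le _ lmin_sub_le
lemma continuous_lmax : Continuous lmax := continuous_of_dist_le _ lmax_sub_le

lemma continuous_trace : Continuous (fun A : Matrix (Fin 3) (Fin 3) ℝ => A.trace) := by
  refine continuous_finset_sum _ fun i _ => ?_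
  exact (continuous_apply i).comp (continuous_apply i)

lemma lmin_neg (A : Matrix (Fin 3) (Fin 3) ℝ) : lmin (-A) = -lmax A := by
  apply le_antisymm
  · have h : lmax A ≤ -lmin (-A) := by
      refine csSup_le (image_nonempty A) ?_
      rintro r ⟨x, hx, rfl⟩
      have h2 : lmin (-A) ≤ qf (-A) x := csInf_le (bddBelow_image (-A)) ⟨x, hx, rfl⟩
      rw [qf_neg] at h2
      linarith
    linarith
  · refine le_csInf (image_nonempty (-A)) ?_
    rintro r ⟨x, hx, rfl⟩
    have h2 : qf A x ≤ lmax A := le_csSup (bddAbove_image A) ⟨x, hx, rfl⟩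
    rw [qf_neg]
    linarith

/-! Spectral decomposition facts. -/

variable {A : Matrix (Fin 3) (Fin 3) ℝ} (hA : A.IsHermitian)

lemma star_U_eq : (star (hA.eigenvectorUnitary : Matrix (Fin 3) (Fin 3) ℝ)) =
    (hA.eigenvectorUnitary : Matrix (Fin 3) (Fin 3) ℝ)ᵀ := by
  ext i j
  simp [Matrix.star_apply, Matrix.transpose_apply]

lemma spectral' : A = (hA.eigenvectorUnitary : Matrix (Fin 3) (Fin 3) ℝ)
    * diagonal hA.eigenvalues * (hA.eigenvectorUnitary : Matrix (Fin 3) (Fin 3) ℝ)ᵀ := by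
  rw [← star_U_eq hA]
  have h := hA.spectral_theorem
  have hd : diagonal ((RCLike.ofReal : ℝ → ℝ) ∘ hA.eigenvalues) = diagonal hA.eigenvalues := by
    rfl
  rw [hd] at h
  exact h

lemma trace_eq : A.trace = ∑ i, hA.eigenvalues i := by
  conv_lhs => rw [spectral' hA, ← star_U_eq hA]
  rw [Matrix.trace_mul_cycle]
  rw [show (star (hA.eigenvectorUnitary : Matrix (Fin 3) (Fin 3) ℝ)) *
      (hA.eigenvectorUnitary : Matrix (Fin 3) (Fin 3) ℝ) = 1 from
      (Matrix.mem_unitaryGroup_iff').mp hA.eigenvectorUnitary.2]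
  rw [one_mul, Matrix.trace_diagonal]

/-- Coordinates of a vector in the eigenbasis. -/
noncomputable def coord (x : Fin 3 → ℝ) (i : Fin 3) : ℝ := ⇑(hA.eigenvectorBasis i) ⬝ᵥ x

lemma transpose_mulVec_eq_coord (x : Fin 3 → ℝ) :
    (hA.eigenvectorUnitary : Matrix (Fin 3) (Fin 3) ℝ)ᵀ *ᵥ x = coord hA x := by
  ext i
  simp [Matrix.mulVec, Matrix.transpose_apply, coord, dotProduct]

lemma qf_eq_sum (x : Fin 3 → ℝ) :
    qf A x = ∑ i, hA.eigenvalues i * (coord hA x i)^2 := by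
  rw [qf]
  conv_lhs => rw [spectral' hA]
  rw [← Matrix.mulVec_mulVec, ← Matrix.mulVec_mulVec]
  rw [Matrix.dotProduct_mulVec x (hA.eigenvectorUnitary : Matrix (Fin 3) (Fin 3) ℝ)]
  rw [← Matrix.mulVec_transpose]
  rw [transpose_mulVec_eq_coord hA x, Matrix.dotProduct_mulVec]
  have : coord hA x ᵥ* diagonal hA.eigenvalues = fun i => hA.eigenvalues i * coord hA x i := by
    ext i
    rw [Matrix.vecMul_diagonal, mul_comm]
  rw [this]
  simp [dotProduct, pow_two]
  ring_nf

lemma dot_eq_sum (x : Fin 3 → ℝ) :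
    x ⬝ᵥ x = ∑ i, (coord hA x i)^2 := by
  have h1 : x ⬝ᵥ x = x ⬝ᵥ (((hA.eigenvectorUnitary : Matrix (Fin 3) (Fin 3) ℝ) *
      (hA.eigenvectorUnitary : Matrix (Fin 3) (Fin 3) ℝ)ᵀ) *ᵥ x) := by
    rw [← star_U_eq hA,
      (Matrix.mem_unitaryGroup_iff).mp hA.eigenvectorUnitary.2, Matrix.one_mulVec]
  rw [h1, ← Matrix.mulVec_mulVec, Matrix.dotProduct_mulVec, ← Matrix.mulVec_transpose,
    transpose_mulVec_eq_coord hA x]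
  simp [dotProduct, pow_two]

lemma bdot (i j : Fin 3) :
    (⇑(hA.eigenvectorBasis i) ⬝ᵥ ⇑(hA.eigenvectorBasis j) : ℝ) = if i = j then 1 else 0 := by
  have h := orthonormal_iff_ite.mp hA.eigenvectorBasis.orthonormal i j
  rw [EuclideanSpace.inner_eq_star_dotProduct] at h
  rw [dotProduct_comm]
  simpa using h

lemma coord_evec (i j : Fin 3) :
    coord hA (⇑(hA.eigenvectorBasis j)) i = if i = j then 1 else 0 := bdot hA i j

lemma evec_mem_sph (i : Fin 3) : (⇑(hA.eigenvectorBasis i) : Fin 3 → ℝ) ∈ sph := by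
  have h := bdot hA i i
  simpa [sph] using h

lemma qf_evec (i : Fin 3) : qf A (⇑(hA.eigenvectorBasis i)) = hA.eigenvalues i := by
  rw [qf_eq_sum hA]
  rw [Finset.sum_eq_single i]
  · simp [coord_evec]
  · intro k _ hk
    simp [coord_evec, hk]
  · simp

lemma spectral_sum :
    A = ∑ i, hA.eigenvalues i • vecMulVec (⇑(hA.eigenvectorBasis i)) (⇑(hA.eigenvectorBasis i)) := by
  conv_lhs => rw [spectral' hA]
  ext j k
  simp only [Matrix.mul_apply, Matrix.transpose_apply, Matrix.diagonal_apply,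
    Matrix.sum_apply, Pi.smul_apply, Matrix.smul_apply, Matrix.vecMulVec_apply,
    Matrix.IsHermitian.eigenvectorUnitary_apply, smul_eq_mul]
  refine Finset.sum_congr rfl fun i _ => ?_
  rw [Finset.sum_eq_single i]
  · simp; ring
  · intro l _ hl
    simp [hl]
  · simp

/-- On the sphere the quadratic form is at least the least eigenvalue. -/
lemma emin_le_qf {x : Fin 3 → ℝ} (hx : x ∈ sph) :
    Finset.univ.inf' ⟨0, Finset.mem_univ 0⟩ hA.eigenvalues ≤ qf A x := by
  rw [qf_eq_sum hA]
  have hx' : ∑ i, (coord hA x i)^2 = 1 := by rw [← dot_eq_sum hA]; exact hx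
  calc Finset.univ.inf' ⟨0, Finset.mem_univ 0⟩ hA.eigenvalues
      = Finset.univ.inf' ⟨0, Finset.mem_univ 0⟩ hA.eigenvalues * ∑ i, (coord hA x i)^2 := by
        rw [hx', mul_one]
    _ = ∑ i, Finset.univ.inf' ⟨0, Finset.mem_univ 0⟩ hA.eigenvalues * (coord hA x i)^2 := by
        rw [Finset.mul_sum]
    _ ≤ ∑ i, hA.eigenvalues i * (coord hA x i)^2 := by
        refine Finset.sum_le_sum fun i _ => ?_
        exact mul_le_mul_of_nonneg_right (Finset.inf'_le _ (Finset.mem_univ i)) (sq_nonneg _)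

lemma qf_le_emax {x : Fin 3 → ℝ} (hx : x ∈ sph) :
    qf A x ≤ Finset.univ.sup' ⟨0, Finset.mem_univ 0⟩ hA.eigenvalues := by
  rw [qf_eq_sum hA]
  have hx' : ∑ i, (coord hA x i)^2 = 1 := by rw [← dot_eq_sum hA]; exact hx
  calc ∑ i, hA.eigenvalues i * (coord hA x i)^2
      ≤ ∑ i, Finset.univ.sup' ⟨0, Finset.mem_univ 0⟩ hA.eigenvalues * (coord hA x i)^2 := by
        refine Finset.sum_le_sum fun i _ => ?_
        exact mul_le_mul_of_nonneg_right (Finset.le_sup' _ (Finset.mem_univ i)) (sq_nonneg _)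
    _ = Finset.univ.sup' ⟨0, Finset.mem_univ 0⟩ hA.eigenvalues * ∑ i, (coord hA x i)^2 := by
        rw [Finset.mul_sum]
    _ = _ := by rw [hx', mul_one]

lemma lmin_eq : lmin A = Finset.univ.inf' ⟨0, Finset.mem_univ 0⟩ hA.eigenvalues := by
  apply le_antisymm
  · obtain ⟨i, _, hi⟩ := Finset.exists_mem_eq_inf' ⟨0, Finset.mem_univ 0⟩ hA.eigenvalues
    rw [hi]
    exact csInf_le (bddBelow_image A) ⟨_, evec_mem_sph hA i, qf_evec hA i⟩
  · refine le_csInf (image_nonempty A) ?_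
    rintro r ⟨x, hx, rfl⟩
    exact emin_le_qf hA hx

lemma lmax_eq : lmax A = Finset.univ.sup' ⟨0, Finset.mem_univ 0⟩ hA.eigenvalues := by
  apply le_antisymm
  · refine csSup_le (image_nonempty A) ?_
    rintro r ⟨x, hx, rfl⟩
    exact qf_le_emax hA hx
  · obtain ⟨i, _, hi⟩ := Finset.exists_mem_eq_sup' ⟨0, Finset.mem_univ 0⟩ hA.eigenvalues
    rw [hi]
    exact le_csSup (bddAbove_image A) ⟨_, evec_mem_sph hA i, qf_evec hA i⟩

lemma sorted_min {σ : Equiv.Perm (Fin 3)} (hm : Monotone (hA.eigenvalues ∘ σ)) :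
    hA.eigenvalues (σ 0) = Finset.univ.inf' ⟨0, Finset.mem_univ 0⟩ hA.eigenvalues := by
  apply le_antisymm
  · refine Finset.le_inf' _ _ fun i _ => ?_
    have : hA.eigenvalues (σ 0) ≤ hA.eigenvalues (σ (σ.symm i)) :=
      hm (Fin.zero_le (σ.symm i))
    simpa using this
  · exact Finset.inf'_le _ (Finset.mem_univ _)

lemma sorted_max {σ : Equiv.Perm (Fin 3)} (hm : Monotone (hA.eigenvalues ∘ σ)) :
    hA.eigenvalues (σ 2) = Finset.univ.sup' ⟨0, Finset.mem_univ 0⟩ hA.eigenvalues := by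
  apply le_antisymm
  · exact Finset.le_sup' _ (Finset.mem_univ _)
  · refine Finset.sup'_le _ _ fun i _ => ?_
    have h2 : σ.symm i ≤ 2 := by
      have := Fin.le_last (σ.symm i)
      simpa using this
    have : hA.eigenvalues (σ (σ.symm i)) ≤ hA.eigenvalues (σ 2) := hm h2
    simpa using this

lemma coord_combo (i j k : Fin 3) (a c : ℝ) :
    coord hA (a • ⇑(hA.eigenvectorBasis i) + c • ⇑(hA.eigenvectorBasis j)) k
      = a * (if k = i then 1 else 0) + c * (if k = j then 1 else 0) := by
  simp only [coord, dotProduct_add, dotProduct_smul, smul_eq_mul]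
  rw [bdot hA k i, bdot hA k j]

lemma qf_combo (i j : Fin 3) (hij : i ≠ j) (a c : ℝ) :
    qf A (a • ⇑(hA.eigenvectorBasis i) + c • ⇑(hA.eigenvectorBasis j))
      = hA.eigenvalues i * a^2 + hA.eigenvalues j * c^2 := by
  rw [qf_eq_sum hA]
  have h : ∀ k, hA.eigenvalues k *
      (coord hA (a • ⇑(hA.eigenvectorBasis i) + c • ⇑(hA.eigenvectorBasis j)) k)^2
      = (if k = i then hA.eigenvalues k * a^2 else 0)
        + (if k = j then hA.eigenvalues k * c^2 else 0) := by
    intro k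
    rw [coord_combo]
    by_cases hki : k = i
    · subst hki
      have hkj : k ≠ j := hij
      simp [hkj]
    · by_cases hkj : k = j
      · subst hkj
        simp [hki]
      · simp [hki, hkj]
  rw [Finset.sum_congr rfl fun k _ => h k, Finset.sum_add_distrib,
    Finset.sum_ite_eq' Finset.univ i, Finset.sum_ite_eq' Finset.univ j]
  simp

lemma vecMulVec_mulVec' (v w x : Fin 3 → ℝ) :
    vecMulVec v w *ᵥ x = (w ⬝ᵥ x) • v := by
  ext i
  simp [vecMulVec_apply, mulVec, dotProduct, Finset.mul_sum, mul_comm, mul_assoc, mul_left_comm]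

lemma qf_special (v w x : Fin 3 → ℝ) :
    qf (vecMulVec v v - vecMulVec w w) x = (v ⬝ᵥ x)^2 - (w ⬝ᵥ x)^2 := by
  rw [qf, sub_mulVec, dotProduct_sub, vecMulVec_mulVec', vecMulVec_mulVec',
    dotProduct_smul, dotProduct_smul]
  have h1 : x ⬝ᵥ v = v ⬝ᵥ x := dotProduct_comm x v
  have h2 : x ⬝ᵥ w = w ⬝ᵥ x := dotProduct_comm x w
  rw [smul_eq_mul, smul_eq_mul, h1, h2]
  ring

lemma vecMulVec_smul_self (c : ℝ) (u : Fin 3 → ℝ) :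
    vecMulVec (c • u) (c • u) = (c * c) • vecMulVec u u := by
  ext i j
  simp [vecMulVec_apply]
  ring

end MidEigAux

open MidEigAux
/-- Let γ send each symmetric 3×3 real matrix to its middle eigenvalue (the
second one when the eigenvalues are listed in nondecreasing order). Then γ is
continuous on the symmetric matrices, odd, and γ(A) = 0 iff A = vvᵀ − wwᵀ for
some v, w ∈ ℝ³. -/
theorem middle_eigenvalue_properties
    (γ : Matrix (Fin 3) (Fin 3) ℝ → ℝ)
    (hγ : ∀ (A : Matrix (Fin 3) (Fin 3) ℝ) (hA : A.IsHermitian),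
      ∃ σ : Equiv.Perm (Fin 3), Monotone (hA.eigenvalues ∘ σ) ∧
        γ A = hA.eigenvalues (σ 1)) :
    ContinuousOn γ {A : Matrix (Fin 3) (Fin 3) ℝ | A.IsHermitian} ∧
    (∀ A : Matrix (Fin 3) (Fin 3) ℝ, A.IsHermitian → γ (-A) = -γ A) ∧
    (∀ A : Matrix (Fin 3) (Fin 3) ℝ, A.IsHermitian →
      (γ A = 0 ↔ ∃ v w : Fin 3 → ℝ, A = vecMulVec v v - vecMulVec w w)) := by
  -- The key formula: on Hermitian matrices, γ A = trace A − lmin A − lmax A.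
  have key : ∀ (A : Matrix (Fin 3) (Fin 3) ℝ) (hA : A.IsHermitian),
      γ A = A.trace - lmin A - lmax A := by
    intro A hA
    obtain ⟨σ, hm, hval⟩ := hγ A hA
    have htr : A.trace = ∑ i, hA.eigenvalues i := trace_eq hA
    have hsum : ∑ i, hA.eigenvalues i
        = hA.eigenvalues (σ 0) + hA.eigenvalues (σ 1) + hA.eigenvalues (σ 2) := by
      rw [← Equiv.sum_comp σ hA.eigenvalues, Fin.sum_univ_three]
    have h0 : hA.eigenvalues (σ 0) = lmin A := by rw [lmin_eq hA, sorted_min hA hm]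
    have h2 : hA.eigenvalues (σ 2) = lmax A := by rw [lmax_eq hA, sorted_max hA hm]
    rw [hval, htr, hsum, h0, h2]
    ring
  refine ⟨?_, ?_, ?_⟩
  · -- Continuity
    have hf : Continuous (fun A : Matrix (Fin 3) (Fin 3) ℝ => A.trace - lmin A - lmax A) :=
      (continuous_trace.sub continuous_lmin).sub continuous_lmax
    refine (hf.continuousOn).congr ?_
    intro A hA
    exact key A hA
  · -- Oddness
    intro A hA
    have hA' : (-A).IsHermitian := hA.neg
    rw [key A hA, key (-A) hA']
    have h1 : lmin (-A) = -lmax A := lmin_neg A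
    have h2 : lmax (-A) = -lmin A := by
      have := lmin_neg (-A)
      rw [neg_neg] at this
      linarith
    rw [h1, h2, Matrix.trace_neg]
    ring
  · -- Zero set
    intro A hA
    obtain ⟨σ, hm, hval⟩ := hγ A hA
    rw [hval]
    constructor
    · -- middle eigenvalue zero → rank-one difference
      intro h1
      have h01 : hA.eigenvalues (σ 0) ≤ 0 := by
        have := hm (show (0 : Fin 3) ≤ 1 by decide)
        simpa [h1] using this
      have h12 : 0 ≤ hA.eigenvalues (σ 2) := by
        have := hm (show (1 : Fin 3) ≤ 2 by decide)
        simpa [h1] using this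
      refine ⟨Real.sqrt (hA.eigenvalues (σ 2)) • ⇑(hA.eigenvectorBasis (σ 2)),
        Real.sqrt (-hA.eigenvalues (σ 0)) • ⇑(hA.eigenvectorBasis (σ 0)), ?_⟩
      rw [vecMulVec_smul_self, vecMulVec_smul_self,
        Real.mul_self_sqrt h12, Real.mul_self_sqrt (by linarith)]
      have hdec := spectral_sum hA
      rw [← Equiv.sum_comp σ
        (fun i => hA.eigenvalues i • vecMulVec (⇑(hA.eigenvectorBasis i)) (⇑(hA.eigenvectorBasis i))),
        Fin.sum_univ_three] at hdec
      rw [h1, zero_smul] at hdec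
      refine hdec.trans ?_
      ext i j
      simp only [Matrix.sub_apply, Matrix.add_apply, Matrix.smul_apply,
        Matrix.vecMulVec_apply, smul_eq_mul, Matrix.zero_apply]
      ring
    · -- rank-one difference → middle eigenvalue zero
      rintro ⟨v, w, rfl⟩
      have h01 : hA.eigenvalues (σ 0) ≤ hA.eigenvalues (σ 1) :=
        hm (show (0 : Fin 3) ≤ 1 by decide)
      have h12 : hA.eigenvalues (σ 1) ≤ hA.eigenvalues (σ 2) :=
        hm (show (1 : Fin 3) ≤ 2 by decide)
      have hσ01 : σ 0 ≠ σ 1 := fun h => by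
        have := σ.injective h; exact absurd this (by decide)
      have hσ12 : σ 1 ≠ σ 2 := fun h => by
        have := σ.injective h; exact absurd this (by decide)
      have hnonneg : 0 ≤ hA.eigenvalues (σ 1) := by
        by_cases hw1 : w ⬝ᵥ ⇑(hA.eigenvectorBasis (σ 1)) = 0
        · have hq := qf_combo hA (σ 0) (σ 1) hσ01 0 1
          have hxx : (0 : ℝ) • ⇑(hA.eigenvectorBasis (σ 0)) + (1 : ℝ) • ⇑(hA.eigenvectorBasis (σ 1))
              = ⇑(hA.eigenvectorBasis (σ 1)) := by
            ext k; simp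
          rw [hxx, qf_special v w, hw1] at hq
          nlinarith [sq_nonneg (v ⬝ᵥ ⇑(hA.eigenvectorBasis (σ 1)))]
        · have hq := qf_combo hA (σ 0) (σ 1) hσ01 1
            (-((w ⬝ᵥ ⇑(hA.eigenvectorBasis (σ 0))) / (w ⬝ᵥ ⇑(hA.eigenvectorBasis (σ 1)))))
          rw [qf_special v w] at hq
          have hwx : w ⬝ᵥ ((1 : ℝ) • ⇑(hA.eigenvectorBasis (σ 0)) +
              (-((w ⬝ᵥ ⇑(hA.eigenvectorBasis (σ 0))) / (w ⬝ᵥ ⇑(hA.eigenvectorBasis (σ 1))))) •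
                ⇑(hA.eigenvectorBasis (σ 1))) = 0 := by
            rw [dotProduct_add, dotProduct_smul, dotProduct_smul, smul_eq_mul, smul_eq_mul,
              one_mul, neg_mul, div_mul_cancel₀ _ hw1]
            ring
          rw [hwx] at hq
          nlinarith [sq_nonneg (v ⬝ᵥ ((1 : ℝ) • ⇑(hA.eigenvectorBasis (σ 0)) +
            (-((w ⬝ᵥ ⇑(hA.eigenvectorBasis (σ 0))) / (w ⬝ᵥ ⇑(hA.eigenvectorBasis (σ 1))))) •
              ⇑(hA.eigenvectorBasis (σ 1)))),
            sq_nonneg ((w ⬝ᵥ ⇑(hA.eigenvectorBasis (σ 0))) / (w ⬝ᵥ ⇑(hA.eigenvectorBasis (σ 1))))]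
      have hnonpos : hA.eigenvalues (σ 1) ≤ 0 := by
        by_cases hv1 : v ⬝ᵥ ⇑(hA.eigenvectorBasis (σ 1)) = 0
        · have hq := qf_combo hA (σ 1) (σ 2) hσ12 1 0
          have hxx : (1 : ℝ) • ⇑(hA.eigenvectorBasis (σ 1)) + (0 : ℝ) • ⇑(hA.eigenvectorBasis (σ 2))
              = ⇑(hA.eigenvectorBasis (σ 1)) := by
            ext k; simp
          rw [hxx, qf_special v w, hv1] at hq
          nlinarith [sq_nonneg (w ⬝ᵥ ⇑(hA.eigenvectorBasis (σ 1)))]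
        · have hq := qf_combo hA (σ 1) (σ 2) hσ12
            (-((v ⬝ᵥ ⇑(hA.eigenvectorBasis (σ 2))) / (v ⬝ᵥ ⇑(hA.eigenvectorBasis (σ 1))))) 1
          rw [qf_special v w] at hq
          have hvx : v ⬝ᵥ ((-((v ⬝ᵥ ⇑(hA.eigenvectorBasis (σ 2))) /
              (v ⬝ᵥ ⇑(hA.eigenvectorBasis (σ 1))))) • ⇑(hA.eigenvectorBasis (σ 1)) +
              (1 : ℝ) • ⇑(hA.eigenvectorBasis (σ 2))) = 0 := by
            rw [dotProduct_add, dotProduct_smul, dotProduct_smul, smul_eq_mul, smul_eq_mul,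
              one_mul, neg_mul, div_mul_cancel₀ _ hv1]
            ring
          rw [hvx] at hq
          nlinarith [sq_nonneg (w ⬝ᵥ ((-((v ⬝ᵥ ⇑(hA.eigenvectorBasis (σ 2))) /
              (v ⬝ᵥ ⇑(hA.eigenvectorBasis (σ 1))))) • ⇑(hA.eigenvectorBasis (σ 1)) +
              (1 : ℝ) • ⇑(hA.eigenvectorBasis (σ 2)))),
            sq_nonneg ((v ⬝ᵥ ⇑(hA.eigenvectorBasis (σ 2))) / (v ⬝ᵥ ⇑(hA.eigenvectorBasis (σ 1))))]
      linarith
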